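/- Let k ≥ 0 be an integer, let 1 < p < ∞, and fix ε with 0 < ε < 1. Then ∫_{|ω|<ε} |ω|^{−pk} F_m(ω)^{p/2} dω → 0 as m → ∞. In other words, condition (i) of the limit lemma holds for the orthogonal Daubechies wavelets: ∫_{|ω|<ε} |ω|^{−pk} |(ψ_m^D)^∧(ω)|^p dω → 0 as m → ∞. -/

import Mathlib

open MeasureTheory Filter
open scoped Topology

/-- `c_m = (∫_0^π sin^{2m-1} u du)⁻¹`. -/
noncomputable def cm (m : ℕ) : ℝ :=
  (∫ u in (0:ℝ)..Real.pi, Real.sin u ^ (2 * m - 1))⁻¹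

/-- `M_m(ω) = 1 - c_m ∫_0^ω sin^{2m-1} u du`, i.e. `|H_m(ω)|²` for the Daubechies filter. -/
noncomputable def Mm (m : ℕ) (ω : ℝ) : ℝ :=
  1 - cm m * ∫ u in (0:ℝ)..ω, Real.sin u ^ (2 * m - 1)

/-- `F_m(ω) = (1/(2π)) M_m(ω/2 + π) ∏_{l=1}^∞ M_m(2^{-l-1} ω) = |(ψ_m^D)^∧(ω)|²`. -/
noncomputable def Fm (m : ℕ) (ω : ℝ) : ℝ :=
  (1 / (2 * Real.pi)) * Mm m (ω / 2 + Real.pi) *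
    ∏' l : ℕ, Mm m (2 ^ (-((l : ℝ) + 2)) * ω)

private lemma sinpow_ii (n : ℕ) (a b : ℝ) :
    IntervalIntegrable (fun u : ℝ => Real.sin u ^ n) volume a b :=
  ((Real.continuous_sin.pow n)).intervalIntegrable a b

private lemma Ipi_pos (n : ℕ) :
    0 < ∫ u in (0:ℝ)..Real.pi, Real.sin u ^ n := by
  apply intervalIntegral.intervalIntegral_pos_of_pos_on (sinpow_ii n 0 Real.pi)
  · intro x hx
    exact pow_pos (Real.sin_pos_of_pos_of_lt_pi hx.1 hx.2) n
  · exact Real.pi_pos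

private lemma I_nonneg (n : ℕ) {x : ℝ} (h0 : 0 ≤ x) (h1 : x ≤ Real.pi) :
    0 ≤ ∫ u in (0:ℝ)..x, Real.sin u ^ n := by
  apply intervalIntegral.integral_nonneg h0
  intro u hu
  exact pow_nonneg (Real.sin_nonneg_of_nonneg_of_le_pi hu.1 (hu.2.trans h1)) n

private lemma I_le_Ipi (n : ℕ) {x : ℝ} (h0 : 0 ≤ x) (h1 : x ≤ Real.pi) :
    (∫ u in (0:ℝ)..x, Real.sin u ^ n) ≤ ∫ u in (0:ℝ)..Real.pi, Real.sin u ^ n := by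
  have h : (∫ u in (0:ℝ)..Real.pi, Real.sin u ^ n) - (∫ u in (0:ℝ)..x, Real.sin u ^ n)
      = ∫ u in x..Real.pi, Real.sin u ^ n :=
    intervalIntegral.integral_interval_sub_left (sinpow_ii n 0 Real.pi) (sinpow_ii n 0 x)
  have h2 : 0 ≤ ∫ u in x..Real.pi, Real.sin u ^ n := by
    apply intervalIntegral.integral_nonneg h1
    intro u hu
    exact pow_nonneg (Real.sin_nonneg_of_nonneg_of_le_pi (h0.trans hu.1) hu.2) n
  linarith

private lemma I_neg (n : ℕ) (hodd : Odd n) (a : ℝ) :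
    (∫ u in (0:ℝ)..(-a), Real.sin u ^ n) = ∫ u in (0:ℝ)..a, Real.sin u ^ n := by
  have h := intervalIntegral.integral_comp_neg (a := (0:ℝ)) (b := a)
      (fun u : ℝ => Real.sin u ^ n)
  have h2 : (∫ u in (0:ℝ)..a, Real.sin (-u) ^ n) = - ∫ u in (0:ℝ)..a, Real.sin u ^ n := by
    rw [← intervalIntegral.integral_neg]
    congr 1
    ext u
    rw [Real.sin_neg, hodd.neg_pow]
  have h3 : (∫ u in (-a)..(0:ℝ), Real.sin u ^ n) = - ∫ u in (0:ℝ)..a, Real.sin u ^ n := by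
    rw [← h2, h]
    norm_num
  rw [intervalIntegral.integral_symm (-a) 0, h3]
  ring

private lemma cm_pos (m : ℕ) : 0 < cm m := inv_pos.2 (Ipi_pos _)

private lemma cm_Ipi (m : ℕ) :
    cm m * (∫ u in (0:ℝ)..Real.pi, Real.sin u ^ (2*m-1)) = 1 :=
  inv_mul_cancel₀ (Ipi_pos _).ne'

private lemma Ipi_lb (n : ℕ) :
    Real.pi/4 * (Real.sqrt 2 / 2) ^ n ≤ ∫ u in (0:ℝ)..Real.pi, Real.sin u ^ n := by
  have pi_pos := Real.pi_pos
  have h1 : (∫ u in (0:ℝ)..(Real.pi/4), Real.sin u ^ n)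
      + (∫ u in (Real.pi/4)..Real.pi, Real.sin u ^ n)
      = ∫ u in (0:ℝ)..Real.pi, Real.sin u ^ n :=
    intervalIntegral.integral_add_adjacent_intervals (sinpow_ii n _ _) (sinpow_ii n _ _)
  have h2 : (∫ u in (Real.pi/4)..(Real.pi/2), Real.sin u ^ n)
      + (∫ u in (Real.pi/2)..Real.pi, Real.sin u ^ n)
      = ∫ u in (Real.pi/4)..Real.pi, Real.sin u ^ n :=
    intervalIntegral.integral_add_adjacent_intervals (sinpow_ii n _ _) (sinpow_ii n _ _)
  have hA : 0 ≤ ∫ u in (0:ℝ)..(Real.pi/4), Real.sin u ^ n := by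
    apply intervalIntegral.integral_nonneg (by linarith)
    intro u hu
    exact pow_nonneg (Real.sin_nonneg_of_nonneg_of_le_pi hu.1 (by linarith [hu.2])) n
  have hC : 0 ≤ ∫ u in (Real.pi/2)..Real.pi, Real.sin u ^ n := by
    apply intervalIntegral.integral_nonneg (by linarith)
    intro u hu
    exact pow_nonneg (Real.sin_nonneg_of_nonneg_of_le_pi (by linarith [hu.1]) hu.2) n
  have hB : Real.pi/4 * (Real.sqrt 2 / 2) ^ n
      ≤ ∫ u in (Real.pi/4)..(Real.pi/2), Real.sin u ^ n := by
    have hmono : ∀ u ∈ Set.Icc (Real.pi/4) (Real.pi/2),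
        (fun _ : ℝ => (Real.sqrt 2 / 2) ^ n) u ≤ Real.sin u ^ n := by
      intro u hu
      have hs : Real.sqrt 2 / 2 ≤ Real.sin u := by
        rw [← Real.sin_pi_div_four]
        apply Real.strictMonoOn_sin.monotoneOn
        · constructor <;> [linarith; linarith]
        · constructor <;> [linarith [hu.1]; linarith [hu.2]]
        · exact hu.1
      exact pow_le_pow_left₀ (by positivity) hs n
    have := intervalIntegral.integral_mono_on (by linarith)
      (intervalIntegrable_const) (sinpow_ii n _ _) hmono
    rw [intervalIntegral.integral_const, smul_eq_mul] at this
    calc Real.pi/4 * (Real.sqrt 2 / 2) ^ n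
        = (Real.pi/2 - Real.pi/4) * (Real.sqrt 2 / 2) ^ n := by ring
      _ ≤ _ := this
  linarith

private lemma cm_ub (m : ℕ) : cm m ≤ 4/Real.pi * (Real.sqrt 2) ^ (2*m-1) := by
  have pi_pos := Real.pi_pos
  have hs2 : (0:ℝ) < Real.sqrt 2 := by positivity
  have hsq : Real.sqrt 2 * Real.sqrt 2 = 2 := Real.mul_self_sqrt (by norm_num)
  have hlb := Ipi_lb (2*m-1)
  have hpos : (0:ℝ) < Real.pi/4 * (Real.sqrt 2 / 2) ^ (2*m-1) := by positivity
  rw [show cm m = (∫ u in (0:ℝ)..Real.pi, Real.sin u ^ (2*m-1))⁻¹ from rfl]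
  have h1 : (∫ u in (0:ℝ)..Real.pi, Real.sin u ^ (2*m-1))⁻¹
      ≤ (Real.pi/4 * (Real.sqrt 2 / 2) ^ (2*m-1))⁻¹ :=
    inv_anti₀ hpos hlb
  refine h1.trans (le_of_eq ?_)
  rw [mul_inv, ← inv_pow]
  have h2 : (Real.sqrt 2 / 2)⁻¹ = Real.sqrt 2 := by
    rw [inv_div, div_eq_iff hs2.ne']
    nlinarith [hsq]
  rw [h2, inv_div]

private lemma Mm_eq_tail (m : ℕ) (x : ℝ) :
    Mm m x = cm m * ∫ u in x..Real.pi, Real.sin u ^ (2*m-1) := by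
  have h : (∫ u in (0:ℝ)..Real.pi, Real.sin u ^ (2*m-1))
      - (∫ u in (0:ℝ)..x, Real.sin u ^ (2*m-1))
      = ∫ u in x..Real.pi, Real.sin u ^ (2*m-1) :=
    intervalIntegral.integral_interval_sub_left (sinpow_ii _ 0 Real.pi) (sinpow_ii _ 0 x)
  rw [← h, mul_sub, cm_Ipi]
  rfl

private lemma Mm_shift_nonneg (m : ℕ) (hm : 1 ≤ m) {x : ℝ} (hx : |x - Real.pi| ≤ 1) :
    0 ≤ Mm m x := by
  have pi_gt := Real.pi_gt_three
  have hodd : Odd (2*m-1) := ⟨m - 1, by omega⟩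
  rw [Mm_eq_tail]
  rw [abs_le] at hx
  apply mul_nonneg (cm_pos m).le
  rcases le_total x Real.pi with h | h
  · apply intervalIntegral.integral_nonneg h
    intro u hu
    exact pow_nonneg (Real.sin_nonneg_of_nonneg_of_le_pi (by linarith [hu.1]) hu.2) _
  · rw [intervalIntegral.integral_symm Real.pi x, neg_nonneg]
    have h4 : 0 ≤ ∫ u in Real.pi..x, -(Real.sin u ^ (2*m-1)) := by
      apply intervalIntegral.integral_nonneg h
      intro u hu
      have hsin : Real.sin u ≤ 0 := by
        have h1 : Real.sin (u - Real.pi) = -Real.sin u := Real.sin_sub_pi u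
        have h2 : 0 ≤ Real.sin (u - Real.pi) :=
          Real.sin_nonneg_of_nonneg_of_le_pi (by linarith [hu.1]) (by linarith [hu.2])
        linarith
      exact neg_nonneg.2 (hodd.pow_nonpos hsin)
    rw [intervalIntegral.integral_neg] at h4
    linarith

private lemma Mm_shift_ub (m : ℕ) (hm : 1 ≤ m) {x : ℝ} (hx : |x - Real.pi| ≤ 1) :
    Mm m x ≤ cm m * |x - Real.pi| ^ (2*m) := by
  rw [Mm_eq_tail]
  have hb : ‖∫ u in x..Real.pi, Real.sin u ^ (2*m-1)‖
      ≤ |x - Real.pi| ^ (2*m-1) * |Real.pi - x| := by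
    apply intervalIntegral.norm_integral_le_of_norm_le_const
    intro u hu
    rw [Set.mem_uIoc] at hu
    have habs : |u - Real.pi| ≤ |x - Real.pi| := by
      rcases hu with ⟨h1, h2⟩ | ⟨h1, h2⟩
      · rw [abs_of_nonpos (by linarith)]
        rcases abs_cases (x - Real.pi) with ⟨he, _⟩ | ⟨he, _⟩ <;> linarith
      · rw [abs_of_nonneg (by linarith)]
        rcases abs_cases (x - Real.pi) with ⟨he, _⟩ | ⟨he, _⟩ <;> linarith
    have hsin : |Real.sin u| ≤ |u - Real.pi| := by
      have h1 : Real.sin (u - Real.pi) = -Real.sin u := Real.sin_sub_pi u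
      calc |Real.sin u| = |Real.sin (u - Real.pi)| := by rw [h1, abs_neg]
        _ ≤ |u - Real.pi| := Real.abs_sin_le_abs
    rw [norm_pow, Real.norm_eq_abs]
    exact pow_le_pow_left₀ (abs_nonneg _) (hsin.trans habs) _
  have h1 : (∫ u in x..Real.pi, Real.sin u ^ (2*m-1))
      ≤ |x - Real.pi| ^ (2*m-1) * |Real.pi - x| :=
    le_trans (le_abs_self _) hb
  have h2 : |x - Real.pi| ^ (2*m-1) * |Real.pi - x| = |x - Real.pi| ^ (2*m) := by
    rw [abs_sub_comm Real.pi x, ← pow_succ]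
    congr 1
    omega
  rw [h2] at h1
  exact mul_le_mul_of_nonneg_left h1 (cm_pos m).le

private lemma Mm_mem_Icc (m : ℕ) (hm : 1 ≤ m) {y : ℝ} (hy : |y| ≤ 1) :
    0 ≤ Mm m y ∧ Mm m y ≤ 1 := by
  have pi_gt := Real.pi_gt_three
  have hodd : Odd (2*m-1) := ⟨m - 1, by omega⟩
  have key : ∀ z : ℝ, 0 ≤ z → z ≤ 1 → 0 ≤ Mm m z ∧ Mm m z ≤ 1 := by
    intro z h0 h1
    have hI0 : 0 ≤ ∫ u in (0:ℝ)..z, Real.sin u ^ (2*m-1) := I_nonneg _ h0 (by linarith)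
    have hI1 : (∫ u in (0:ℝ)..z, Real.sin u ^ (2*m-1))
        ≤ ∫ u in (0:ℝ)..Real.pi, Real.sin u ^ (2*m-1) := I_le_Ipi _ h0 (by linarith)
    constructor
    · have := mul_le_mul_of_nonneg_left hI1 (cm_pos m).le
      rw [cm_Ipi] at this
      show 0 ≤ 1 - cm m * _
      linarith
    · show 1 - cm m * _ ≤ 1
      nlinarith [(cm_pos m).le]
  rcases le_total 0 y with h | h
  · exact key y h (by rwa [abs_of_nonneg h] at hy)
  · have h1 : Mm m y = Mm m (-y) := by
      show 1 - cm m * _ = 1 - cm m * _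
      rw [show y = -(-y) by ring, I_neg _ hodd (-y)]
      ring_nf
    rw [h1]
    exact key (-y) (by linarith) (by rwa [abs_of_nonpos h] at hy)

private lemma tprod_mem_Icc {f : ℕ → ℝ} (h0 : ∀ i, 0 ≤ f i) (h1 : ∀ i, f i ≤ 1) :
    0 ≤ (∏' i, f i) ∧ (∏' i, f i) ≤ 1 := by
  by_cases hM : Multipliable f
  · have hp := hM.hasProd
    constructor
    · exact ge_of_tendsto' hp (fun s => Finset.prod_nonneg fun i _ => h0 i)
    · exact le_of_tendsto' hp (fun s => Finset.prod_le_one (fun i _ => h0 i) (fun i _ => h1 i))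
  · rw [tprod_eq_one_of_not_multipliable hM]
    exact ⟨zero_le_one, le_refl 1⟩

private lemma Fm_bounds (m : ℕ) (hm : 1 ≤ m) (ω : ℝ) (hω : |ω| ≤ 1) :
    0 ≤ Fm m ω ∧ Fm m ω ≤ (|ω| / Real.sqrt 2) ^ (2*m) := by
  have pi_gt := Real.pi_gt_three
  have hs2 : (0:ℝ) < Real.sqrt 2 := by positivity
  have hsq : Real.sqrt 2 * Real.sqrt 2 = 2 := Real.mul_self_sqrt (by norm_num)
  set t := |ω| with ht
  have ht0 : 0 ≤ t := abs_nonneg ω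
  have hxabs : |ω/2 + Real.pi - Real.pi| = t/2 := by
    rw [show ω/2 + Real.pi - Real.pi = ω/2 by ring, abs_div]
    norm_num
    exact ht.symm
  have hx1 : |ω/2 + Real.pi - Real.pi| ≤ 1 := by rw [hxabs]; linarith
  have hM0 : 0 ≤ Mm m (ω/2 + Real.pi) := Mm_shift_nonneg m hm hx1
  have hM1 : Mm m (ω/2 + Real.pi) ≤ cm m * (t/2) ^ (2*m) := by
    have := Mm_shift_ub m hm hx1
    rwa [hxabs] at this
  have hf : ∀ l : ℕ, 0 ≤ Mm m (2 ^ (-((l : ℝ) + 2)) * ω)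
      ∧ Mm m (2 ^ (-((l : ℝ) + 2)) * ω) ≤ 1 := by
    intro l
    apply Mm_mem_Icc m hm
    rw [abs_mul, abs_of_pos (Real.rpow_pos_of_pos (by norm_num) _)]
    have h1 : (2:ℝ) ^ (-((l : ℝ) + 2)) ≤ 1 :=
      Real.rpow_le_one_of_one_le_of_nonpos (by norm_num) (neg_nonpos.2 (by positivity))
    calc (2:ℝ) ^ (-((l : ℝ) + 2)) * |ω| ≤ 1 * 1 := by
          apply mul_le_mul h1 hω (abs_nonneg _) zero_le_one
      _ = 1 := by norm_num
  have hP := tprod_mem_Icc (fun l => (hf l).1) (fun l => (hf l).2)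
  set P := ∏' l : ℕ, Mm m (2 ^ (-((l : ℝ) + 2)) * ω) with hPdef
  constructor
  · show (0:ℝ) ≤ 1 / (2 * Real.pi) * Mm m (ω / 2 + Real.pi) * P
    exact mul_nonneg (mul_nonneg (by positivity) hM0) hP.1
  · have step1 : Fm m ω ≤ (1/(2*Real.pi)) * (cm m * (t/2) ^ (2*m)) := by
      have hA : Mm m (ω/2 + Real.pi) * P ≤ (cm m * (t/2) ^ (2*m)) * 1 :=
        mul_le_mul hM1 hP.2 hP.1 (mul_nonneg (cm_pos m).le (by positivity))
      calc Fm m ω = (1/(2*Real.pi)) * (Mm m (ω/2 + Real.pi) * P) := by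
            rw [Fm, mul_assoc]
        _ ≤ (1/(2*Real.pi)) * ((cm m * (t/2) ^ (2*m)) * 1) := by
            apply mul_le_mul_of_nonneg_left hA (by positivity)
        _ = (1/(2*Real.pi)) * (cm m * (t/2) ^ (2*m)) := by ring
    have step2 : (1/(2*Real.pi)) * (cm m * (t/2) ^ (2*m)) ≤ (t/Real.sqrt 2) ^ (2*m) := by
      have hc := cm_ub m
      have hX : (0:ℝ) ≤ Real.sqrt 2 ^ (2*m-1) * (t/2) ^ (2*m) := by positivity
      have h1 : (1/(2*Real.pi)) * (cm m * (t/2) ^ (2*m))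
          ≤ (1/(2*Real.pi)) * ((4/Real.pi * Real.sqrt 2 ^ (2*m-1)) * (t/2) ^ (2*m)) := by
        apply mul_le_mul_of_nonneg_left _ (by positivity)
        exact mul_le_mul_of_nonneg_right hc (by positivity)
      have h2 : (1/(2*Real.pi)) * ((4/Real.pi * Real.sqrt 2 ^ (2*m-1)) * (t/2) ^ (2*m))
          = (2/Real.pi^2) * (Real.sqrt 2 ^ (2*m-1) * (t/2) ^ (2*m)) := by
        field_simp
        ring
      have h3 : (2/Real.pi^2) * (Real.sqrt 2 ^ (2*m-1) * (t/2) ^ (2*m))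
          ≤ Real.sqrt 2 * (Real.sqrt 2 ^ (2*m-1) * (t/2) ^ (2*m)) := by
        apply mul_le_mul_of_nonneg_right _ hX
        have hpi2 : (9:ℝ) ≤ Real.pi^2 := by nlinarith
        have hs1 : (1:ℝ) ≤ Real.sqrt 2 := by nlinarith
        have : (2:ℝ)/Real.pi^2 ≤ 1 := by
          rw [div_le_one (by positivity)]
          linarith
        linarith
      have h4 : Real.sqrt 2 * (Real.sqrt 2 ^ (2*m-1) * (t/2) ^ (2*m))
          = (t/Real.sqrt 2) ^ (2*m) := by
        have ht2 : t / Real.sqrt 2 = Real.sqrt 2 * (t/2) := by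
          rw [div_eq_iff hs2.ne']
          linear_combination (-(t/2)) * hsq
        have hpow : Real.sqrt 2 ^ (2*m) = Real.sqrt 2 * Real.sqrt 2 ^ (2*m-1) := by
          conv_lhs => rw [show 2*m = (2*m-1)+1 by omega]
          rw [pow_succ]
          ring
        rw [ht2, mul_pow, hpow]
        ring
      linarith
    linarith

theorem stmt3 (k : ℕ) (p : ℝ) (hp : 1 < p) (ε : ℝ) (hε0 : 0 < ε) (hε1 : ε < 1) :
    Tendsto (fun m : ℕ =>
        ∫ ω in {ω : ℝ | |ω| < ε}, |ω| ^ (-(p * (k : ℝ))) * Fm m ω ^ (p / 2))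
      atTop (𝓝 0) := by
  have hs2 : (0:ℝ) < Real.sqrt 2 := by positivity
  have hsq : Real.sqrt 2 * Real.sqrt 2 = 2 := Real.mul_self_sqrt (by norm_num)
  have hs21 : (1:ℝ) < Real.sqrt 2 := by nlinarith
  set r : ℝ := Real.sqrt 2 ^ (-p) with hrdef
  have hr0 : 0 ≤ r := Real.rpow_nonneg hs2.le _
  have hr1 : r < 1 := Real.rpow_lt_one_of_one_lt_of_neg hs21 (by linarith)
  have hmeas : MeasurableSet {ω : ℝ | |ω| < ε} :=
    (isOpen_lt continuous_abs continuous_const).measurableSet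
  have hs_eq : {ω : ℝ | |ω| < ε} = Set.Ioo (-ε) ε := by
    ext x; simp [abs_lt]
  have hvol : volume {ω : ℝ | |ω| < ε} < ⊤ := by
    rw [hs_eq, Real.volume_Ioo]
    exact ENNReal.ofReal_lt_top
  set V : ℝ := (volume {ω : ℝ | |ω| < ε}).toReal with hV
  -- pointwise estimates for large m
  have key : ∀ m : ℕ, 1 ≤ m → k + 1 ≤ m → ∀ ω : ℝ, |ω| < ε →
      0 ≤ |ω| ^ (-(p * (k : ℝ))) * Fm m ω ^ (p / 2) ∧
      |ω| ^ (-(p * (k : ℝ))) * Fm m ω ^ (p / 2) ≤ r ^ m := by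
    intro m hm1 hmk ω hω
    have ht0 : (0:ℝ) ≤ |ω| := abs_nonneg ω
    have ht1 : |ω| ≤ 1 := le_of_lt (hω.trans hε1)
    obtain ⟨hF0, hF1⟩ := Fm_bounds m hm1 ω ht1
    have hp2 : (0:ℝ) ≤ p / 2 := by linarith
    refine ⟨mul_nonneg (Real.rpow_nonneg ht0 _) (Real.rpow_nonneg hF0 _), ?_⟩
    have hFb : Fm m ω ^ (p / 2) ≤ ((|ω| / Real.sqrt 2) ^ (2*m) : ℝ) ^ (p / 2) :=
      Real.rpow_le_rpow hF0 hF1 hp2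
    have hbase : (0:ℝ) ≤ |ω| / Real.sqrt 2 := by positivity
    have hconv : (((|ω| / Real.sqrt 2) ^ (2*m) : ℝ)) ^ (p / 2)
        = (|ω| / Real.sqrt 2) ^ (p * m) := by
      rw [← Real.rpow_natCast (|ω| / Real.sqrt 2) (2*m), ← Real.rpow_mul hbase]
      congr 1
      push_cast
      ring
    rw [hconv] at hFb
    have hpm0 : (0:ℝ) < p * m := by
      have : (1:ℝ) ≤ (m:ℝ) := by exact_mod_cast hm1
      nlinarith
    have hsplit : (|ω| / Real.sqrt 2) ^ (p * m)
        = |ω| ^ (p * m) * Real.sqrt 2 ^ (-(p * m)) := by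
      rw [Real.div_rpow ht0 hs2.le, Real.rpow_neg hs2.le, div_eq_mul_inv]
    have hrm : r ^ m = Real.sqrt 2 ^ (-(p * m)) := by
      rw [hrdef, ← Real.rpow_natCast (Real.sqrt 2 ^ (-p)) m, ← Real.rpow_mul hs2.le]
      congr 1
      ring
    have hA : |ω| ^ (-(p * (k : ℝ))) * |ω| ^ (p * m) ≤ 1 := by
      rcases eq_or_lt_of_le ht0 with h0 | h0
      · rw [← h0, Real.zero_rpow hpm0.ne', mul_zero]
        exact zero_le_one
      · rw [← Real.rpow_add h0]
        apply Real.rpow_le_one ht0 ht1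
        have hk : (k:ℝ) + 1 ≤ (m:ℝ) := by exact_mod_cast hmk
        nlinarith
    calc |ω| ^ (-(p * (k : ℝ))) * Fm m ω ^ (p / 2)
        ≤ |ω| ^ (-(p * (k : ℝ))) * ((|ω| / Real.sqrt 2) ^ (p * m)) :=
          mul_le_mul_of_nonneg_left hFb (Real.rpow_nonneg ht0 _)
      _ = (|ω| ^ (-(p * (k : ℝ))) * |ω| ^ (p * m)) * Real.sqrt 2 ^ (-(p * m)) := by
          rw [hsplit]; ring
      _ ≤ 1 * Real.sqrt 2 ^ (-(p * m)) :=
          mul_le_mul_of_nonneg_right hA (Real.rpow_nonneg hs2.le _)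
      _ = r ^ m := by rw [one_mul, hrm]
  -- squeeze
  have hupper : ∀ᶠ m : ℕ in atTop,
      (∫ ω in {ω : ℝ | |ω| < ε}, |ω| ^ (-(p * (k : ℝ))) * Fm m ω ^ (p / 2)) ≤ r ^ m * V := by
    filter_upwards [eventually_ge_atTop (k + 1)] with m hm
    have hm1 : 1 ≤ m := le_trans (Nat.le_add_left 1 k) hm
    have hb := norm_setIntegral_le_of_norm_le_const_ae' (C := r ^ m) hvol
      (f := fun ω : ℝ => |ω| ^ (-(p * (k : ℝ))) * Fm m ω ^ (p / 2))
      (Eventually.of_forall (fun ω hω => by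
        obtain ⟨h0, h1⟩ := key m hm1 hm ω hω
        rw [Real.norm_eq_abs, abs_of_nonneg h0]
        exact h1))
    calc (∫ ω in {ω : ℝ | |ω| < ε}, |ω| ^ (-(p * (k : ℝ))) * Fm m ω ^ (p / 2))
        ≤ ‖∫ ω in {ω : ℝ | |ω| < ε}, |ω| ^ (-(p * (k : ℝ))) * Fm m ω ^ (p / 2)‖ := by
          rw [Real.norm_eq_abs]; exact le_abs_self _
      _ ≤ r ^ m * V := hb
  have hlower : ∀ᶠ m : ℕ in atTop,
      (0:ℝ) ≤ ∫ ω in {ω : ℝ | |ω| < ε}, |ω| ^ (-(p * (k : ℝ))) * Fm m ω ^ (p / 2) := by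
    filter_upwards [eventually_ge_atTop (k + 1)] with m hm
    have hm1 : 1 ≤ m := le_trans (Nat.le_add_left 1 k) hm
    exact setIntegral_nonneg hmeas (fun ω hω => (key m hm1 hm ω hω).1)
  have hlim : Tendsto (fun m : ℕ => r ^ m * V) atTop (𝓝 0) := by
    have := (tendsto_pow_atTop_nhds_zero_of_lt_one hr0 hr1).mul_const V
    rwa [zero_mul] at this
  exact tendsto_of_tendsto_of_tendsto_of_le_of_le' tendsto_const_nhds hlim hlower hupper
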